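/- (Proposition 2.26, eq. (2.38): det_∞(s/(2π) − Φ̂_2/(2π)) = Γ_ℝ(s−1)^{-b_2}.) For every positive integer b and every real number s with 1 < s < 3, one has Complex.exp( − deriv (fun z : ℂ => (b : ℂ) * π^z * ζ_H((s−1)/2, z)) 0 ) = ( Real.sqrt 2 * π^(((s : ℂ) − 1)/2) / Γ(((s : ℂ) − 1)/2) )^b, i.e. the regularized determinant of the operator with spectrum {1 − 2n : n ≥ 0} (each eigenvalue of multiplicity b) equals Γ_ℝ(s−1)^{-b} = (2^{-1/2} π^{-(s−1)/2} Γ((s−1)/2))^{-b}. -/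

import Mathlib

open HurwitzZeta Complex

namespace LerchAux

open Filter Topology Finset Set


noncomputable def ee (a : ℝ) (z : ℂ) (n : ℕ) : ℂ :=
  (z - 1) * (((n + a : ℝ) : ℂ) ^ (-z) + ((n + 1 + a : ℝ) : ℂ) ^ (-z)) / 2
    + ((((n : ℝ) + 1 + a : ℝ) : ℂ) ^ (1 - z) - (((n : ℝ) + a : ℝ) : ℂ) ^ (1 - z))

noncomputable def TT (a : ℝ) (N : ℕ) (z : ℂ) : ℂ :=
  (z - 1) * ((∑ n ∈ Finset.range (N + 1), (((n : ℝ) + a : ℝ) : ℂ) ^ (-z))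
      - (((N : ℝ) + a : ℝ) : ℂ) ^ (-z) / 2)
    + (((N : ℝ) + a : ℝ) : ℂ) ^ (1 - z)

noncomputable def GG (a : ℝ) (z : ℂ) : ℂ := TT a 0 z + ∑' n, ee a z n

noncomputable def ll (a : ℝ) (N : ℕ) : ℝ :=
  ((N : ℝ) + a) * Real.log ((N : ℝ) + a) - ((N : ℝ) + a) + Real.log ((N : ℝ) + a) / 2
    - ∑ n ∈ Finset.range (N + 1), Real.log ((n : ℝ) + a)

lemma TT_succ (a : ℝ) (z : ℂ) (N : ℕ) : TT a (N + 1) z = TT a N z + ee a z N := by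
  simp only [TT, ee, Finset.sum_range_succ]
  push_cast
  ring

lemma TT_eq (a : ℝ) (z : ℂ) (N : ℕ) :
    TT a N z = TT a 0 z + ∑ n ∈ Finset.range N, ee a z n := by
  induction N with
  | zero => simp
  | succ n ih => rw [TT_succ, ih, Finset.sum_range_succ]; ring

lemma hasDerivAt_ofReal_cpow_const {x : ℝ} (hx : 0 < x) (w : ℂ) :
    HasDerivAt (fun y : ℝ => ((y : ℝ) : ℂ) ^ w) (w * (x : ℂ) ^ (w - 1)) x := by
  have h := ((hasDerivAt_id (x : ℂ)).cpow_const (c := w)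
    (Or.inl (by simpa using hx))).comp_ofReal
  simpa using h

lemma rpow_aux {a c q p s : ℝ} (ha : 0 < a) (hac : a ≤ c) (hqp : q ≤ p) (hs : s ≤ q - p) :
    c ^ q ≤ max 1 (a ^ s) * c ^ p := by
  have hc : 0 < c := lt_of_lt_of_le ha hac
  have h1 : c ^ q = c ^ (q - p) * c ^ p := by
    rw [← Real.rpow_add hc]; ring_nf
  rw [h1]
  have hcp : 0 ≤ c ^ p := (Real.rpow_pos_of_pos hc p).le
  refine mul_le_mul_of_nonneg_right ?_ hcp
  rcases le_or_gt 1 c with h | h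
  · exact le_max_of_le_left (Real.rpow_le_one_of_one_le_of_nonpos h (by linarith))
  · refine le_max_of_le_right ?_
    calc c ^ (q - p) ≤ a ^ (q - p) :=
          Real.rpow_le_rpow_of_nonpos ha hac (by linarith)
      _ ≤ a ^ s := Real.rpow_le_rpow_of_exponent_ge ha (by linarith) hs

lemma summable_aux {a p : ℝ} (ha : 0 < a) (hp : 1 < p) :
    Summable (fun n : ℕ => ((n : ℝ) + a) ^ (-p)) := by
  rw [← summable_nat_add_iff 1]
  have hs0 : Summable (fun n : ℕ => ((n : ℝ)) ^ (-p)) :=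
    Real.summable_nat_rpow.2 (by linarith)
  have hs : Summable (fun n : ℕ => ((n : ℝ) + 1) ^ (-p)) := by
    have := (summable_nat_add_iff 1).2 hs0
    simpa using this
  refine hs.of_nonneg_of_le (fun n => (Real.rpow_pos_of_pos (by positivity) _).le) fun n => ?_
  refine Real.rpow_le_rpow_of_nonpos (by positivity) ?_ (by linarith)
  push_cast; linarith

lemma diffTT (a : ℝ) (ha : 0 < a) (N : ℕ) : Differentiable ℂ (TT a N) := by
  have key : ∀ n : ℕ, Differentiable ℂ (fun z : ℂ => (((n : ℝ) + a : ℝ) : ℂ) ^ (-z)) := by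
    intro n
    apply Differentiable.const_cpow (by fun_prop)
    exact Or.inl (by exact_mod_cast ne_of_gt (by positivity : (0:ℝ) < (n:ℝ) + a))
  have key2 : ∀ n : ℕ, Differentiable ℂ (fun z : ℂ => (((n : ℝ) + a : ℝ) : ℂ) ^ (1 - z)) := by
    intro n
    apply Differentiable.const_cpow (by fun_prop)
    exact Or.inl (by exact_mod_cast ne_of_gt (by positivity : (0:ℝ) < (n:ℝ) + a))
  unfold TT
  apply Differentiable.add
  · apply Differentiable.mul (by fun_prop)
    exact Differentiable.sub (Differentiable.fun_sum fun n _ => key n) ((key N).div_const 2)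
  · exact key2 N

lemma ee_bound {a : ℝ} (ha : 0 < a) {z : ℂ} (hz : -2 < z.re) (n : ℕ) :
    ‖ee a z n‖ ≤ ‖z - 1‖ * ‖z‖ * ‖z + 1‖ / 4 * ((n : ℝ) + a) ^ (-(z.re + 2)) := by
  set c : ℝ := (n : ℝ) + a with hcdef
  have hc : 0 < c := by positivity
  set M : ℝ := ‖z - 1‖ * ‖z‖ * ‖z + 1‖ / 2 * c ^ (-(z.re + 2)) with hMdef
  have hM : 0 ≤ M := by positivity
  set F : ℝ → ℂ := fun x =>
    (z - 1) * (((x : ℂ) - (c : ℂ)) * (((c : ℝ) : ℂ) ^ (-z) + ((x : ℝ) : ℂ) ^ (-z))) / 2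
      + (((x : ℝ) : ℂ) ^ (1 - z) - ((c : ℝ) : ℂ) ^ (1 - z)) with hF
  set F' : ℝ → ℂ := fun x =>
    (z - 1) * ((((c : ℝ) : ℂ) ^ (-z) - ((x : ℝ) : ℂ) ^ (-z)) / 2
      + ((x : ℂ) - (c : ℂ)) * (-z * ((x : ℝ) : ℂ) ^ (-z - 1)) / 2) with hF'
  set F'' : ℝ → ℂ := fun x =>
    (z - 1) * (((x : ℂ) - (c : ℂ)) * (z * (z + 1) * ((x : ℝ) : ℂ) ^ (-z - 2))) / 2 with hF''
  have hX : ∀ x : ℝ, HasDerivAt (fun y : ℝ => ((y : ℝ) : ℂ)) 1 x := fun x => by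
    simpa using (hasDerivAt_id x).ofReal_comp
  have HdF : ∀ x : ℝ, 0 < x → HasDerivAt F (F' x) x := by
    intro x hx
    have P := hasDerivAt_ofReal_cpow_const hx (-z)
    have P2 := hasDerivAt_ofReal_cpow_const hx (1 - z)
    rw [show (1 : ℂ) - z - 1 = -z by ring] at P2
    have H1 : HasDerivAt
        (fun y : ℝ => ((y : ℂ) - (c : ℂ)) * (((c : ℝ) : ℂ) ^ (-z) + ((y : ℝ) : ℂ) ^ (-z)))
        (1 * (((c : ℝ) : ℂ) ^ (-z) + ((x : ℝ) : ℂ) ^ (-z))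
          + ((x : ℂ) - (c : ℂ)) * (-z * (x : ℂ) ^ (-z - 1))) x :=
      HasDerivAt.mul ((hX x).sub_const _) (P.const_add _)
    have H := ((H1.const_mul (z - 1)).div_const 2).fun_add (P2.sub_const (((c : ℝ) : ℂ) ^ (1 - z)))
    refine H.congr_deriv ?_
    simp only [hF']
    ring
  have HdF' : ∀ x : ℝ, 0 < x → HasDerivAt F' (F'' x) x := by
    intro x hx
    have P := hasDerivAt_ofReal_cpow_const hx (-z)
    have P1 := hasDerivAt_ofReal_cpow_const hx (-z - 1)
    rw [show (-z - 1 - 1 : ℂ) = -z - 2 by ring] at P1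
    have H1 : HasDerivAt (fun y : ℝ => (((c : ℝ) : ℂ) ^ (-z) - ((y : ℝ) : ℂ) ^ (-z)) / 2)
        (-(-z * (x : ℂ) ^ (-z - 1)) / 2) x := (P.const_sub _).div_const 2
    have H2 : HasDerivAt (fun y : ℝ => ((y : ℂ) - (c : ℂ)) * (-z * ((y : ℝ) : ℂ) ^ (-z - 1)) / 2)
        ((1 * (-z * (x : ℂ) ^ (-z - 1))
          + ((x : ℂ) - (c : ℂ)) * (-z * ((-z - 1) * (x : ℂ) ^ (-z - 2)))) / 2) x :=
      (HasDerivAt.mul ((hX x).sub_const _) (P1.const_mul (-z))).div_const 2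
    have H := (H1.fun_add H2).const_mul (z - 1)
    refine H.congr_deriv ?_
    simp only [hF'']
    ring
  have normF'' : ∀ x : ℝ, c ≤ x → x ≤ c + 1 → ‖F'' x‖ ≤ M := by
    intro x h1 h2
    have hxpos : 0 < x := lt_of_lt_of_le hc h1
    have hxc : (0:ℝ) ≤ x - c := by linarith
    have e1 : ((x : ℂ) - (c : ℂ)) = ((x - c : ℝ) : ℂ) := by push_cast; ring
    have e2 : ‖((x : ℝ) : ℂ) ^ (-z - 2)‖ = x ^ (-z.re - 2) := by
      rw [Complex.norm_cpow_eq_rpow_re_of_pos hxpos]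
      norm_num
    have e3 : x ^ (-z.re - 2) ≤ c ^ (-(z.re + 2)) := by
      rw [show -(z.re + 2) = -z.re - 2 by ring]
      exact Real.rpow_le_rpow_of_nonpos hc h1 (by linarith)
    have enorm : ‖F'' x‖ = ‖z - 1‖ * ((x - c) * (‖z‖ * ‖z + 1‖ * x ^ (-z.re - 2))) / 2 := by
      rw [hF'']
      rw [norm_div, norm_mul, e1, norm_mul, Complex.norm_real, norm_mul, norm_mul, e2,
        Real.norm_eq_abs, _root_.abs_of_nonneg hxc, show ‖(2:ℂ)‖ = 2 by norm_num]
    rw [enorm, hMdef]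
    calc ‖z - 1‖ * ((x - c) * (‖z‖ * ‖z + 1‖ * x ^ (-z.re - 2))) / 2
        ≤ ‖z - 1‖ * (1 * (‖z‖ * ‖z + 1‖ * c ^ (-(z.re + 2)))) / 2 := by
          gcongr
          · linarith
      _ = ‖z - 1‖ * ‖z‖ * ‖z + 1‖ / 2 * c ^ (-(z.re + 2)) := by ring
  have step1 : ∀ x ∈ Icc c (c + 1), ‖F' x‖ ≤ M * (x - c) := by
    apply image_norm_le_of_norm_deriv_right_le_deriv_boundary
      (f := F') (f' := F'') (B := fun x => M * (x - c)) (B' := fun _ => M)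
      (a := c) (b := c + 1)
    case hf =>
      intro x hx
      exact (HdF' x (lt_of_lt_of_le hc hx.1)).continuousAt.continuousWithinAt
    case hf' =>
      intro x hx
      exact (HdF' x (lt_of_lt_of_le hc hx.1)).hasDerivWithinAt
    case ha => simp [hF']
    case hB =>
      intro x
      simpa using ((hasDerivAt_id x).sub_const c).const_mul M
    case bound =>
      intro x hx
      exact normF'' x hx.1 hx.2.le
  have step2 : ∀ x ∈ Icc c (c + 1), ‖F x‖ ≤ M * (x - c) ^ 2 / 2 := by
    apply image_norm_le_of_norm_deriv_right_le_deriv_boundary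
      (f := F) (f' := F') (B := fun x => M * (x - c) ^ 2 / 2) (B' := fun x => M * (x - c))
      (a := c) (b := c + 1)
    case hf =>
      intro x hx
      exact (HdF x (lt_of_lt_of_le hc hx.1)).continuousAt.continuousWithinAt
    case hf' =>
      intro x hx
      exact (HdF x (lt_of_lt_of_le hc hx.1)).hasDerivWithinAt
    case ha => simp [hF]
    case hB =>
      intro x
      have h2 : HasDerivAt (fun y : ℝ => (y - c) ^ 2) (2 * (x - c)) x := by
        simpa using ((hasDerivAt_id x).sub_const c).fun_pow 2
      have h3 := (h2.const_mul M).div_const 2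
      refine h3.congr_deriv ?_
      ring
    case bound =>
      intro x hx
      exact step1 x ⟨hx.1, hx.2.le⟩
  have key := step2 (c + 1) ⟨by linarith, le_refl _⟩
  have heq : ee a z n = F (c + 1) := by
    have b2 : ((n : ℝ) + 1 + a) = c + 1 := by rw [hcdef]; ring
    simp only [ee, hcdef.symm, b2, hF]
    rw [show (((c + 1 : ℝ)) : ℂ) - (c : ℂ) = 1 by push_cast; ring]
    ring
  rw [heq]
  refine key.trans (le_of_eq ?_)
  rw [hMdef, show c + 1 - c = 1 by ring]
  ring

lemma tlu {a : ℝ} (ha : 0 < a) :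
    TendstoLocallyUniformlyOn (fun N z => TT a N z) (GG a) atTop {z : ℂ | -2⁻¹ < z.re} := by
  have hV : IsOpen {z : ℂ | -2⁻¹ < z.re} := isOpen_lt continuous_const continuous_re
  rw [tendstoLocallyUniformlyOn_iff_forall_isCompact hV]
  intro K hK hKc
  rcases K.eq_empty_or_nonempty with rfl | hne
  · exact tendstoUniformlyOn_empty
  obtain ⟨R, hR⟩ := isBounded_iff_forall_norm_le.1 hKc.isBounded
  obtain ⟨w, hwK, hw⟩ := hKc.exists_isMinOn hne Complex.continuous_re.continuousOn
  set σ : ℝ := w.re with hσdef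
  have hσ : -2⁻¹ < σ := hK hwK
  have hreK : ∀ z ∈ K, σ ≤ z.re := fun z hz => hw hz
  have hreR : ∀ z ∈ K, z.re ≤ R := fun z hz =>
    le_trans (le_trans (le_abs_self _) (Complex.abs_re_le_norm z)) (hR z hz)
  have hR0 : 0 ≤ R := le_trans (norm_nonneg _) (hR _ hne.some_mem)
  set C : ℝ := (R + 1) * (R + 1) * (R + 1) / 4 * max 1 (a ^ (σ - R)) with hCdef
  have hu : Summable (fun n : ℕ => C * ((n : ℝ) + a) ^ (-(σ + 2))) :=
    (summable_aux ha (by linarith)).mul_left C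
  have hb : ∀ (n : ℕ) (z : ℂ), z ∈ K → ‖ee a z n‖ ≤ C * ((n : ℝ) + a) ^ (-(σ + 2)) := by
    intro n z hzK
    have h1 : -2 < z.re := by have := hreK z hzK; linarith
    refine (ee_bound ha h1 n).trans ?_
    have hna : (0:ℝ) < (n : ℝ) + a := by positivity
    have e1 : ((n : ℝ) + a) ^ (-(z.re + 2))
        ≤ max 1 (a ^ (σ - R)) * ((n : ℝ) + a) ^ (-(σ + 2)) := by
      refine rpow_aux ha (le_add_of_nonneg_left (Nat.cast_nonneg n)) ?_ ?_
      · have := hreK z hzK; linarith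
      · have := hreR z hzK; linarith
    have e2 : ‖z - 1‖ * ‖z‖ * ‖z + 1‖ / 4 ≤ (R + 1) * (R + 1) * (R + 1) / 4 := by
      have n1 : ‖z - 1‖ ≤ R + 1 := by
        calc ‖z - 1‖ ≤ ‖z‖ + ‖(1:ℂ)‖ := norm_sub_le _ _
          _ ≤ R + 1 := by rw [norm_one]; linarith [hR z hzK]
      have n2 : ‖z‖ ≤ R + 1 := by have := hR z hzK; linarith
      have n3 : ‖z + 1‖ ≤ R + 1 := by
        calc ‖z + 1‖ ≤ ‖z‖ + ‖(1:ℂ)‖ := norm_add_le _ _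
          _ ≤ R + 1 := by rw [norm_one]; linarith [hR z hzK]
      gcongr <;> positivity
    calc ‖z - 1‖ * ‖z‖ * ‖z + 1‖ / 4 * ((n : ℝ) + a) ^ (-(z.re + 2))
        ≤ (R + 1) * (R + 1) * (R + 1) / 4
            * (max 1 (a ^ (σ - R)) * ((n : ℝ) + a) ^ (-(σ + 2))) := by
          refine mul_le_mul e2 e1 (by positivity) (by positivity)
      _ = C * ((n : ℝ) + a) ^ (-(σ + 2)) := by rw [hCdef]; ring
  have hsum := tendstoUniformlyOn_tsum_nat hu hb
  have hconst : TendstoUniformlyOn (fun (_ : ℕ) z => TT a 0 z) (fun z => TT a 0 z) atTop K := by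
    rw [Metric.tendstoUniformlyOn_iff]
    intro ε hε
    filter_upwards with n x _
    simpa using hε
  have hadd := hconst.add hsum
  have : GG a = fun z => TT a 0 z + ∑' n, ee a z n := rfl
  rw [this]
  refine hadd.congr ?_
  filter_upwards with N z _
  exact (TT_eq a z N).symm

lemma cpow_tendsto_zero {a : ℝ} (ha : 0 < a) {w : ℂ} (hw : w.re < 0) :
    Tendsto (fun N : ℕ => ((((N : ℝ) + a : ℝ)) : ℂ) ^ w) atTop (𝓝 0) := by
  rw [tendsto_zero_iff_norm_tendsto_zero]
  have heq : ∀ N : ℕ, ‖((((N : ℝ) + a : ℝ)) : ℂ) ^ w‖ = ((N : ℝ) + a) ^ w.re := by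
    intro N
    rw [Complex.norm_cpow_eq_rpow_re_of_pos (by positivity)]
  simp_rw [heq]
  have h1 : Tendsto (fun N : ℕ => (N : ℝ) + a) atTop atTop :=
    tendsto_atTop_add_const_right _ _ tendsto_natCast_atTop_atTop
  have h2 : Tendsto (fun x : ℝ => x ^ w.re) atTop (𝓝 0) := by
    have := tendsto_rpow_neg_atTop (y := -w.re) (by linarith)
    simpa using this
  exact h2.comp h1

lemma tendsto_TT_of_one_lt_re {a : ℝ} (ha : 0 < a) (ha1 : a ≤ 1) {z : ℂ} (hz : 1 < z.re) :
    Tendsto (fun N => TT a N z) atTop (𝓝 ((z - 1) * hurwitzZeta ↑a z)) := by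
  have hsum := hasSum_hurwitzZeta_of_one_lt_re ⟨ha.le, ha1⟩ hz
  have hsum' : HasSum (fun n : ℕ => ((((n : ℝ) + a : ℝ)) : ℂ) ^ (-z)) (hurwitzZeta ↑a z) := by
    have heq : (fun n : ℕ => ((((n : ℝ) + a : ℝ)) : ℂ) ^ (-z))
        = fun n : ℕ => 1 / ((n : ℂ) + (a : ℂ)) ^ z := by
      funext n
      rw [cpow_neg, one_div]
      push_cast
      rfl
    rw [heq]
    exact_mod_cast hsum
  have h1 : Tendsto (fun N : ℕ => ∑ n ∈ Finset.range (N + 1), ((((n : ℝ) + a : ℝ)) : ℂ) ^ (-z))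
      atTop (𝓝 (hurwitzZeta ↑a z)) :=
    hsum'.tendsto_sum_nat.comp (tendsto_add_atTop_nat 1)
  have hw2 : (-z).re < 0 := by simp only [Complex.neg_re]; linarith
  have hw3 : (1 - z).re < 0 := by
    simp only [Complex.sub_re, Complex.one_re]; linarith
  have h2 := cpow_tendsto_zero ha hw2
  have h3 := cpow_tendsto_zero ha hw3
  have h := (((h1.sub (h2.div_const 2)).const_mul (z - 1)).add h3)
  rw [show (z - 1) * (hurwitzZeta (↑a) z - 0 / 2) + 0 = (z - 1) * hurwitzZeta (↑a) z
    by ring] at h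
  exact Filter.Tendsto.congr (fun N => rfl) h

noncomputable def hh (a : ℝ) (z : ℂ) : ℂ :=
  (z - 1) * (hurwitzZeta ↑a z - 1 / (z - 1) / Gammaℝ z) + 1 / Gammaℝ z

lemma hh_eq (a : ℝ) {z : ℂ} (hz : z ≠ 1) : hh a z = (z - 1) * hurwitzZeta ↑a z := by
  have h0 : z - 1 ≠ 0 := sub_ne_zero.2 hz
  have h2 : (z - 1) * (1 / (z - 1)) = 1 := by field_simp
  have h3 : hh a z
      = (z - 1) * hurwitzZeta ↑a z - ((z - 1) * (1 / (z - 1))) * (1 / Gammaℝ z)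
        + 1 / Gammaℝ z := by
    rw [hh]; ring
  rw [h3, h2]; ring

lemma hh_diff (a : ℝ) : DifferentiableOn ℂ (hh a) {z : ℂ | -2⁻¹ < z.re} := by
  intro x hx
  apply DifferentiableAt.differentiableWithinAt
  by_cases hx1 : x = 1
  · subst hx1
    exact ((differentiableAt_id.sub (differentiableAt_const 1)).mul
      (differentiableAt_hurwitzZeta_sub_one_div ↑a)).add
      ((Complex.differentiable_Gammaℝ_inv 1).congr_of_eventuallyEq
        (by filter_upwards with y; rw [one_div]) : DifferentiableAt ℂ (fun z => 1 / Gammaℝ z) 1)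
  · have hG : DifferentiableAt ℂ (fun z : ℂ => 1 / Gammaℝ z) x := by
      have := Complex.differentiable_Gammaℝ_inv x
      refine this.congr_of_eventuallyEq ?_
      filter_upwards with y
      rw [one_div]
    have hζ : DifferentiableAt ℂ (fun z : ℂ => hurwitzZeta ↑a z) x :=
      differentiableAt_hurwitzZeta ↑a hx1
    have hdiv : DifferentiableAt ℂ (fun z : ℂ => 1 / (z - 1) / Gammaℝ z) x := by
      have h1 : DifferentiableAt ℂ (fun z : ℂ => 1 / (z - 1)) x :=
        (differentiableAt_const 1).div (differentiableAt_id.sub (differentiableAt_const 1))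
          (sub_ne_zero.2 hx1)
      have h2 : DifferentiableAt ℂ (fun z : ℂ => 1 / (z - 1) * (Gammaℝ z)⁻¹) x :=
        h1.mul (Complex.differentiable_Gammaℝ_inv x)
      refine h2.congr_of_eventuallyEq ?_
      filter_upwards with y
      rw [div_eq_mul_inv]
    exact ((differentiableAt_id.sub (differentiableAt_const 1)).mul (hζ.sub hdiv)).add hG

lemma GG_eq {a : ℝ} (ha : 0 < a) (ha1 : a ≤ 1) {z : ℂ} (hz : -2⁻¹ < z.re) (hz1 : z ≠ 1) :
    GG a z = (z - 1) * hurwitzZeta ↑a z := by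
  have hV : IsOpen {z : ℂ | -2⁻¹ < z.re} := isOpen_lt continuous_const continuous_re
  have hGdiff : DifferentiableOn ℂ (GG a) {z : ℂ | -2⁻¹ < z.re} :=
    (tlu ha).differentiableOn
      (Filter.Eventually.of_forall fun N => (diffTT a ha N).differentiableOn) hV
  have hGa : AnalyticOnNhd ℂ (GG a) {z : ℂ | -2⁻¹ < z.re} := hGdiff.analyticOnNhd hV
  have hha : AnalyticOnNhd ℂ (hh a) {z : ℂ | -2⁻¹ < z.re} := (hh_diff a).analyticOnNhd hV
  have hpre : IsPreconnected {z : ℂ | -2⁻¹ < z.re} :=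
    (convex_halfSpace_re_gt (-2⁻¹)).isPreconnected
  have h2mem : (2 : ℂ) ∈ {z : ℂ | -2⁻¹ < z.re} := by norm_num [Set.mem_setOf_eq]
  have heq2 : ∀ y : ℂ, 1 < y.re → GG a y = hh a y := by
    intro y hy
    have hy1 : y ≠ 1 := by
      intro h; rw [h] at hy; simp at hy
    rw [hh_eq a hy1]
    exact tendsto_nhds_unique ((tlu ha).tendsto_at (by simp only [Set.mem_setOf_eq]; linarith))
      (tendsto_TT_of_one_lt_re ha ha1 hy)
  have hfg : GG a =ᶠ[𝓝 2] hh a := by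
    have hopen : IsOpen {z : ℂ | 1 < z.re} := isOpen_lt continuous_const continuous_re
    have : {z : ℂ | 1 < z.re} ∈ 𝓝 (2 : ℂ) := hopen.mem_nhds (by norm_num [Set.mem_setOf_eq])
    filter_upwards [this] with y hy
    exact heq2 y hy
  have := hGa.eqOn_of_preconnected_of_eventuallyEq hha hpre h2mem hfg
  have hzmem : z ∈ {z : ℂ | -2⁻¹ < z.re} := hz
  rw [this hzmem, hh_eq a hz1]

lemma TT_zero (a : ℝ) (ha : 0 < a) (N : ℕ) : TT a N 0 = (a : ℂ) - 2⁻¹ := by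
  simp only [TT, neg_zero, cpow_zero, sub_zero, cpow_one, Finset.sum_const,
    Finset.card_range, nsmul_eq_mul, mul_one]
  push_cast
  ring

lemma cpow_neg_hasDerivAt {c : ℝ} (hc : 0 < c) :
    HasDerivAt (fun z : ℂ => ((c : ℝ) : ℂ) ^ (-z)) (-((Real.log c : ℝ) : ℂ)) 0 := by
  have hc0 : ((c : ℝ) : ℂ) ≠ 0 := by exact_mod_cast hc.ne'
  have hneg : HasDerivAt (fun z : ℂ => -z) (-1) (0 : ℂ) := by
    simpa using (hasDerivAt_id (0 : ℂ)).fun_neg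
  have h := hneg.const_cpow (c := ((c : ℝ) : ℂ)) (Or.inl hc0)
  rw [neg_zero, cpow_zero] at h
  have hlog : Complex.log ((c : ℝ) : ℂ) = ((Real.log c : ℝ) : ℂ) := (Complex.ofReal_log hc.le).symm
  rw [hlog] at h
  convert h using 1
  ring

lemma cpow_one_sub_hasDerivAt {c : ℝ} (hc : 0 < c) :
    HasDerivAt (fun z : ℂ => ((c : ℝ) : ℂ) ^ (1 - z))
      (-(((c : ℝ) : ℂ) * ((Real.log c : ℝ) : ℂ))) 0 := by
  have hc0 : ((c : ℝ) : ℂ) ≠ 0 := by exact_mod_cast hc.ne'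
  have hsub : HasDerivAt (fun z : ℂ => 1 - z) (-1) (0 : ℂ) := by
    simpa using (hasDerivAt_id (0 : ℂ)).const_sub (1 : ℂ)
  have h := hsub.const_cpow (c := ((c : ℝ) : ℂ)) (Or.inl hc0)
  rw [sub_zero, cpow_one] at h
  have hlog : Complex.log ((c : ℝ) : ℂ) = ((Real.log c : ℝ) : ℂ) := (Complex.ofReal_log hc.le).symm
  rw [hlog] at h
  convert h using 1
  ring

lemma deriv_TT_zero (a : ℝ) (ha : 0 < a) (N : ℕ) :
    deriv (TT a N) 0 = (N : ℂ) + 2⁻¹ + (∑ n ∈ Finset.range (N + 1), ((Real.log ((n : ℝ) + a) : ℝ) : ℂ))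
      - ((Real.log ((N : ℝ) + a) : ℝ) : ℂ) / 2
      - (((N : ℝ) + a : ℝ) : ℂ) * ((Real.log ((N : ℝ) + a) : ℝ) : ℂ) := by
  have hpos : ∀ n : ℕ, (0:ℝ) < (n : ℝ) + a := fun n => by positivity
  have hsum : HasDerivAt (fun z : ℂ => ∑ n ∈ Finset.range (N + 1), (((n : ℝ) + a : ℝ) : ℂ) ^ (-z))
      (∑ n ∈ Finset.range (N + 1), -(((Real.log ((n : ℝ) + a) : ℝ)) : ℂ)) 0 :=
    HasDerivAt.fun_sum fun n _ => cpow_neg_hasDerivAt (hpos n)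
  have hmul := ((hasDerivAt_id (0:ℂ)).sub_const 1).mul
    (hsum.sub ((cpow_neg_hasDerivAt (hpos N)).div_const 2))
  have hTT := hmul.add (cpow_one_sub_hasDerivAt (hpos N))
  have : HasDerivAt (TT a N) _ 0 := hTT
  rw [this.deriv]
  simp only [neg_zero, cpow_zero, Finset.sum_const, Finset.card_range, nsmul_eq_mul,
    mul_one, id_eq, Finset.sum_neg_distrib, Pi.sub_apply]
  push_cast
  ring

lemma tendsto_ll {a : ℝ} (ha : 0 < a) :
    Tendsto (ll a) atTop (𝓝 (Real.log (Real.Gamma a) - Real.log (2 * Real.pi) / 2)) := by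
  have hΓ : 0 < Real.Gamma a := Real.Gamma_pos_of_pos ha
  -- A-part
  have hA : Tendsto (fun N => Real.log (Real.GammaSeq a N)) atTop
      (𝓝 (Real.log (Real.Gamma a))) :=
    ((Real.continuousAt_log hΓ.ne').tendsto).comp (Real.GammaSeq_tendsto_Gamma a)
  have hA' : ∀ N : ℕ, 1 ≤ N → Real.log (Real.GammaSeq a N)
      = a * Real.log N + Real.log ((N.factorial : ℝ))
        - ∑ j ∈ Finset.range (N + 1), Real.log (a + (j : ℝ)) := by
    intro N hN
    have hN0 : (0:ℝ) < N := by exact_mod_cast hN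
    have hfact : (0:ℝ) < (N.factorial : ℝ) := by exact_mod_cast N.factorial_pos
    have hprodpos : (0:ℝ) < ∏ j ∈ Finset.range (N + 1), (a + (j : ℝ)) :=
      Finset.prod_pos fun j _ => by positivity
    rw [Real.GammaSeq, Real.log_div (by positivity) hprodpos.ne',
      Real.log_mul (by positivity) hfact.ne', Real.log_rpow hN0,
      Real.log_prod (fun j _ => by positivity)]
  -- B-part (Stirling)
  have hB : Tendsto (fun N => Real.log (Stirling.stirlingSeq N)) atTop
      (𝓝 (Real.log (Real.sqrt Real.pi))) := by
    have hπ : (0:ℝ) < Real.sqrt Real.pi := Real.sqrt_pos.2 Real.pi_pos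
    exact ((Real.continuousAt_log hπ.ne').tendsto).comp Stirling.tendsto_stirlingSeq_sqrt_pi
  have hB' : ∀ N : ℕ, 1 ≤ N → Real.log (Stirling.stirlingSeq N)
      = Real.log ((N.factorial : ℝ)) - (Real.log 2 + Real.log N) / 2 - N * (Real.log N - 1) := by
    intro N hN
    have hN0 : (0:ℝ) < N := by exact_mod_cast hN
    have hfact : (0:ℝ) < (N.factorial : ℝ) := by exact_mod_cast N.factorial_pos
    have hsq : (0:ℝ) < Real.sqrt (2 * N) := Real.sqrt_pos.2 (by positivity)
    have hpow : (0:ℝ) < ((N : ℝ) / Real.exp 1) ^ N :=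
      pow_pos (div_pos hN0 (Real.exp_pos 1)) N
    rw [Stirling.stirlingSeq, Real.log_div hfact.ne' (by positivity),
      Real.log_mul hsq.ne' hpow.ne', Real.log_sqrt (by positivity),
      Real.log_mul two_ne_zero hN0.ne', Real.log_pow,
      Real.log_div hN0.ne' (Real.exp_pos 1).ne', Real.log_exp]
    ring
  -- C-part
  have hC : Tendsto (fun N : ℕ => ((N : ℝ) + a + 2⁻¹) * (Real.log ((N : ℝ) + a) - Real.log N))
      atTop (𝓝 a) := by
    have hdiv0 : Tendsto (fun N : ℕ => a / (N : ℝ)) atTop (𝓝 0) :=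
      tendsto_const_nhds.div_atTop tendsto_natCast_atTop_atTop
    have hlog1 : Tendsto (fun N : ℕ => Real.log (1 + a / N)) atTop (𝓝 0) := by
      have h1 : Tendsto (fun N : ℕ => 1 + a / (N : ℝ)) atTop (𝓝 1) := by
        simpa using tendsto_const_nhds.add hdiv0
      have := ((Real.continuousAt_log one_ne_zero).tendsto).comp h1
      simpa [Function.comp_def] using this
    have hT1 : Tendsto (fun N : ℕ => (N : ℝ) * Real.log (1 + a / N)) atTop (𝓝 a) :=
      (Real.tendsto_mul_log_one_add_div_atTop a).comp tendsto_natCast_atTop_atTop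
    have hT2 : Tendsto (fun N : ℕ => ((N : ℝ) + a + 2⁻¹) * Real.log (1 + a / N)) atTop
        (𝓝 a) := by
      have hX : Tendsto (fun N : ℕ => (a + 2⁻¹) * Real.log (1 + a / N)) atTop (𝓝 0) := by
        simpa using hlog1.const_mul (a + 2⁻¹)
      have h := hT1.add hX
      rw [add_zero] at h
      exact h.congr fun N => by ring
    refine hT2.congr' ?_
    filter_upwards [eventually_ge_atTop 1] with N hN
    have hN0 : (0:ℝ) < N := by exact_mod_cast hN
    congr 1
    rw [show (1 : ℝ) + a / N = ((N : ℝ) + a) / N by field_simp,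
      Real.log_div (by positivity) hN0.ne']
  -- assemble
  have key := (hA.sub hB).add ((hC.sub_const a).sub_const (Real.log 2 / 2))
  have hlim : Real.log (Real.Gamma a) - Real.log (Real.sqrt Real.pi) + (a - a - Real.log 2 / 2)
      = Real.log (Real.Gamma a) - Real.log (2 * Real.pi) / 2 := by
    rw [Real.log_sqrt Real.pi_pos.le, Real.log_mul two_ne_zero Real.pi_pos.ne']
    ring
  rw [hlim] at key
  refine key.congr' ?_
  filter_upwards [eventually_ge_atTop 1] with N hN
  rw [hA' N hN, hB' N hN, ll]
  have hsumeq : ∑ j ∈ Finset.range (N + 1), Real.log (a + (j : ℝ))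
      = ∑ n ∈ Finset.range (N + 1), Real.log ((n : ℝ) + a) :=
    Finset.sum_congr rfl fun j _ => by rw [add_comm]
  rw [hsumeq]
  ring

lemma hurwitzZeta_deriv_aux {a : ℝ} (ha : 0 < a) (ha1 : a ≤ 1) :
    deriv (hurwitzZeta ↑a) 0
      = ((Real.log (Real.Gamma a) - Real.log (2 * Real.pi) / 2 : ℝ) : ℂ) ∧
    hurwitzZeta (↑a : UnitAddCircle) 0 = 2⁻¹ - a := by
  have hV : IsOpen {z : ℂ | -2⁻¹ < z.re} := isOpen_lt continuous_const continuous_re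
  have h0mem : (0 : ℂ) ∈ {z : ℂ | -2⁻¹ < z.re} := by norm_num [Set.mem_setOf_eq]
  have hGdiff : DifferentiableOn ℂ (GG a) {z : ℂ | -2⁻¹ < z.re} :=
    (tlu ha).differentiableOn
      (Filter.Eventually.of_forall fun N => (diffTT a ha N).differentiableOn) hV
  have hGat : DifferentiableAt ℂ (GG a) 0 :=
    hGdiff.differentiableAt (hV.mem_nhds h0mem)
  -- GG a 0 = a - 1/2
  have hG0 : GG a 0 = (a : ℂ) - 2⁻¹ := by
    have h1 : Tendsto (fun N => TT a N 0) atTop (𝓝 (GG a 0)) := (tlu ha).tendsto_at h0mem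
    have h2 : Tendsto (fun N => TT a N 0) atTop (𝓝 ((a : ℂ) - 2⁻¹)) := by
      simp only [TT_zero a ha]
      exact tendsto_const_nhds
    exact tendsto_nhds_unique h1 h2
  -- near 0, hurwitzZeta equals GG/(z-1)
  have heq : (fun z : ℂ => GG a z / (z - 1)) =ᶠ[𝓝 0] hurwitzZeta ↑a := by
    have hball : Metric.ball (0 : ℂ) 2⁻¹ ∈ 𝓝 (0 : ℂ) :=
      Metric.ball_mem_nhds 0 (by norm_num)
    filter_upwards [hball] with y hy
    have hyn : ‖y‖ < 2⁻¹ := by simpa [Metric.mem_ball, dist_zero_right] using hy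
    have hyre : -2⁻¹ < y.re := by
      have := abs_re_le_norm y
      have h2 : |y.re| < 2⁻¹ := lt_of_le_of_lt this hyn
      have := abs_lt.1 h2
      linarith [this.1]
    have hy1 : y ≠ 1 := by
      intro h
      rw [h] at hyn
      norm_num at hyn
    rw [GG_eq ha ha1 hyre hy1]
    exact mul_div_cancel_left₀ _ (sub_ne_zero.2 hy1)
  -- value at 0
  have hval : hurwitzZeta (↑a : UnitAddCircle) 0 = 2⁻¹ - a := by
    have h0 : GG a 0 / (0 - 1) = hurwitzZeta (↑a : UnitAddCircle) 0 := heq.eq_of_nhds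
    rw [hG0] at h0
    rw [← h0]
    rw [show ((0:ℂ) - 1) = -1 by ring]
    field_simp
    ring
  refine ⟨?_, hval⟩
  -- derivative
  have hdiv : HasDerivAt (fun z : ℂ => GG a z / (z - 1))
      (-(deriv (GG a) 0) - GG a 0) 0 := by
    have h1 := (hGat.hasDerivAt.fun_div ((hasDerivAt_id (0:ℂ)).sub_const 1) (by norm_num)) 
    refine h1.congr_deriv ?_
    norm_num
  have hderiv_eq : deriv (hurwitzZeta ↑a) 0 = -(deriv (GG a) 0) - GG a 0 := by
    rw [← heq.deriv_eq]
    exact hdiv.deriv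
  -- limit of deriv TT
  have hdTT : Tendsto (fun N => deriv (TT a N) 0) atTop (𝓝 (deriv (GG a) 0)) := by
    have := ((tlu ha).deriv
      (Filter.Eventually.of_forall fun N => (diffTT a ha N).differentiableOn) hV).tendsto_at h0mem
    exact this
  have hllC : Tendsto (fun N => ((ll a N : ℝ) : ℂ)) atTop (𝓝 (deriv (hurwitzZeta ↑a) 0)) := by
    have h1 : Tendsto (fun N => -(deriv (TT a N) 0) - TT a N 0) atTop
        (𝓝 (-(deriv (GG a) 0) - GG a 0)) := by
      have h2 : Tendsto (fun N => TT a N 0) atTop (𝓝 (GG a 0)) := (tlu ha).tendsto_at h0mem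
      exact (hdTT.neg).sub h2
    rw [hderiv_eq]
    refine Tendsto.congr ?_ h1
    intro N
    rw [deriv_TT_zero a ha, TT_zero a ha, ll]
    push_cast
    ring
  have hllR : Tendsto (fun N => ((ll a N : ℝ) : ℂ)) atTop
      (𝓝 ((Real.log (Real.Gamma a) - Real.log (2 * Real.pi) / 2 : ℝ) : ℂ)) :=
    (Complex.continuous_ofReal.tendsto _).comp (tendsto_ll ha)
  exact tendsto_nhds_unique hllC hllR

end LerchAux

open LerchAux in
/-- Proposition 2.26, eq. (2.38): the zeta-regularized determinant
`det_∞(s/(2π) − Φ̂_2/(2π))` equals `Γ_ℝ(s−1)^{-b_2}`, where `Φ̂_2` has spectrum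
`{1 − 2n : n ≥ 0}`, each eigenvalue of multiplicity `b = b_2`, so that its zeta function is
`b π^z ζ_H((s−1)/2, z)`, and `Γ_ℝ(s−1) = 2^{-1/2} π^{-(s−1)/2} Γ((s−1)/2)`. -/
theorem regularized_det_Phi_hat_two (b : ℕ) (hb : 0 < b) (s : ℝ) (hs1 : 1 < s) (hs3 : s < 3) :
    Complex.exp (- deriv (fun z : ℂ =>
        (b : ℂ) * ((Real.pi : ℝ) : ℂ) ^ z *
          hurwitzZeta (((s - 1) / 2 : ℝ) : UnitAddCircle) z) 0) =
      ((Real.sqrt 2 : ℂ) * ((Real.pi : ℝ) : ℂ) ^ (((s : ℂ) - 1) / 2) /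
        Complex.Gamma (((s : ℂ) - 1) / 2)) ^ b := by
  set a : ℝ := (s - 1) / 2 with hadef
  have ha : 0 < a := by rw [hadef]; linarith
  have ha1 : a ≤ 1 := by rw [hadef]; linarith
  have hΓ : 0 < Real.Gamma a := Real.Gamma_pos_of_pos ha
  obtain ⟨hder, hval⟩ := hurwitzZeta_deriv_aux ha ha1
  -- derivative of π^z at 0
  have hπ0 : ((Real.pi : ℝ) : ℂ) ≠ 0 := by
    exact_mod_cast Real.pi_ne_zero
  have h1 : HasDerivAt (fun z : ℂ => ((Real.pi : ℝ) : ℂ) ^ z)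
      (((Real.log Real.pi : ℝ) : ℂ)) 0 := by
    have h := (hasStrictDerivAt_const_cpow (x := ((Real.pi : ℝ) : ℂ)) (y := (0:ℂ))
      (Or.inl hπ0)).hasDerivAt
    rw [cpow_zero, one_mul, ← Complex.ofReal_log Real.pi_pos.le] at h
    exact h
  have h2 : HasDerivAt (hurwitzZeta (↑a : UnitAddCircle))
      (deriv (hurwitzZeta (↑a : UnitAddCircle)) 0) 0 :=
    (differentiableAt_hurwitzZeta _ (by norm_num : (0:ℂ) ≠ 1)).hasDerivAt
  have hmul := (h1.const_mul ((b : ℕ) : ℂ)).fun_mul h2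
  set x : ℝ := Real.log Real.pi * (2⁻¹ - a)
      + (Real.log (Real.Gamma a) - Real.log (2 * Real.pi) / 2) with hxdef
  have hD : deriv (fun z : ℂ =>
      (b : ℂ) * ((Real.pi : ℝ) : ℂ) ^ z * hurwitzZeta (↑a : UnitAddCircle) z) 0
      = (b : ℂ) * (x : ℂ) := by
    rw [hmul.deriv, hval, hder, cpow_zero, hxdef]
    push_cast
    ring
  rw [hD]
  have hexp : -((b : ℂ) * (x : ℂ)) = (b : ℕ) * ((-x : ℝ) : ℂ) := by push_cast; ring
  rw [hexp, Complex.exp_nat_mul, ← Complex.ofReal_exp]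
  -- real computation of exp(-x)
  have hreal : Real.exp (-x) = Real.sqrt 2 * Real.pi ^ a / Real.Gamma a := by
    have hx' : -x = a * Real.log Real.pi + Real.log 2 / 2 + (- Real.log (Real.Gamma a)) := by
      rw [hxdef, Real.log_mul two_ne_zero Real.pi_pos.ne']
      ring
    rw [hx', Real.exp_add, Real.exp_add]
    have e1 : Real.exp (a * Real.log Real.pi) = Real.pi ^ a := by
      rw [Real.rpow_def_of_pos Real.pi_pos, mul_comm]
    have e2 : Real.exp (Real.log 2 / 2) = Real.sqrt 2 := by
      rw [Real.sqrt_eq_rpow, Real.rpow_def_of_pos two_pos]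
      ring_nf
    have e3 : Real.exp (-Real.log (Real.Gamma a)) = (Real.Gamma a)⁻¹ := by
      rw [Real.exp_neg, Real.exp_log hΓ]
    rw [e1, e2, e3]
    ring
  rw [hreal]
  -- identify the base
  have hca : ((s : ℂ) - 1) / 2 = ((a : ℝ) : ℂ) := by rw [hadef]; push_cast; ring
  rw [hca, Complex.Gamma_ofReal, ← Complex.ofReal_cpow Real.pi_pos.le]
  norm_cast
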